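/- Let R be a commutative ring, let H_A : Matrix a₀ a₁ R, H_B : Matrix b₀ b₁ R, H_C : Matrix c₀ c₁ R be matrices over finite index types, and fix q : c₀. Let e_q denote the column vector in R^{c₀} with a 1 in position q and 0 elsewhere, regarded as a matrix with a one-element column index. Define ∂₁^{AB} = [H_A⊗I_{b₀} ∣ I_{a₀}⊗H_B], ∂₁^{ABC} = [H_A⊗I_{b₀}⊗I_{c₀} ∣ I_{a₀}⊗H_B⊗I_{c₀} ∣ I_{a₀}⊗I_{b₀}⊗H_C], γ₀ = I_{a₀×b₀}⊗e_q, and γ₁ the block matrix with row index (a₁×b₀×c₀) ⊕ (a₀×b₁×c₀) ⊕ (a₀×b₀×c₁) and column index (a₁×b₀) ⊕ (a₀×b₁) whose (1,1) block is I_{a₁×b₀}⊗e_q, whose (2,2) block is I_{a₀×b₁}⊗e_q, and whose remaining blocks are zero. Then ∂₁^{ABC} * γ₁ = γ₀ * ∂₁^{AB}. -/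

import Mathlib

open Matrix Kronecker

/-- Degree-0/degree-1 chain map identity for the inclusion of a 2D lifted product code
into the 3D lifted product code: `∂₁^{ABC} * γ₁ = γ₀ * ∂₁^{AB}`, where `γ₀ = I_{a₀×b₀}⊗e_q`
and `γ₁` has diagonal blocks `I_{a₁×b₀}⊗e_q`, `I_{a₀×b₁}⊗e_q` and zero elsewhere. -/
theorem inclusion_chain_map_degree_one {R : Type*} [CommRing R]
    {a₀ a₁ b₀ b₁ c₀ c₁ : Type*}
    [Fintype a₀] [Fintype a₁] [Fintype b₀] [Fintype b₁] [Fintype c₀] [Fintype c₁]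
    [DecidableEq a₀] [DecidableEq a₁] [DecidableEq b₀] [DecidableEq b₁]
    [DecidableEq c₀] [DecidableEq c₁]
    (HA : Matrix a₀ a₁ R) (HB : Matrix b₀ b₁ R) (HC : Matrix c₀ c₁ R) (q : c₀) :
    -- e_q : the standard basis column vector at position q
    let e : Matrix c₀ Unit R := Matrix.of fun k _ => if k = q then 1 else 0
    -- γ₀ = I_{a₀×b₀} ⊗ e_q
    let γ₀ : Matrix (a₀ × b₀ × c₀) (a₀ × b₀) R :=
      Matrix.reindex (Equiv.prodAssoc a₀ b₀ c₀) (Equiv.prodUnique (a₀ × b₀) Unit)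
        ((1 : Matrix (a₀ × b₀) (a₀ × b₀) R) ⊗ₖ e)
    -- γ₁: (1,1) block I_{a₁×b₀}⊗e_q, (2,2) block I_{a₀×b₁}⊗e_q, rest zero
    let γ₁ : Matrix ((a₁ × b₀ × c₀) ⊕ (a₀ × b₁ × c₀) ⊕ (a₀ × b₀ × c₁))
        ((a₁ × b₀) ⊕ (a₀ × b₁)) R :=
      fromBlocks
        (Matrix.reindex (Equiv.prodAssoc a₁ b₀ c₀) (Equiv.prodUnique (a₁ × b₀) Unit)
          ((1 : Matrix (a₁ × b₀) (a₁ × b₀) R) ⊗ₖ e))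
        0 0
        (fromRows
          (Matrix.reindex (Equiv.prodAssoc a₀ b₁ c₀) (Equiv.prodUnique (a₀ × b₁) Unit)
            ((1 : Matrix (a₀ × b₁) (a₀ × b₁) R) ⊗ₖ e))
          0)
    -- ∂₁^{ABC} * γ₁ = γ₀ * ∂₁^{AB}
    (fromCols (HA ⊗ₖ ((1 : Matrix b₀ b₀ R) ⊗ₖ (1 : Matrix c₀ c₀ R)))
      (fromCols ((1 : Matrix a₀ a₀ R) ⊗ₖ (HB ⊗ₖ (1 : Matrix c₀ c₀ R)))
        ((1 : Matrix a₀ a₀ R) ⊗ₖ ((1 : Matrix b₀ b₀ R) ⊗ₖ HC)))) * γ₁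
    = γ₀ * fromCols (HA ⊗ₖ (1 : Matrix b₀ b₀ R)) ((1 : Matrix a₀ a₀ R) ⊗ₖ HB) := by
  intro e γ₀ γ₁
  ext ⟨a, b, c⟩ j
  cases j with
  | inl j =>
    obtain ⟨x, y⟩ := j
    simp [γ₀, γ₁, e, mul_apply, Fintype.sum_sum_type, Fintype.sum_prod_type,
      fromCols, fromBlocks, fromRows, Matrix.one_apply, Equiv.prodAssoc,
      Finset.sum_ite_eq, Finset.sum_ite_eq', mul_ite, ite_and, Finset.mul_sum]
    split_ifs <;> rfl
  | inr j =>
    obtain ⟨x, y⟩ := j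
    simp [γ₀, γ₁, e, mul_apply, Fintype.sum_sum_type, Fintype.sum_prod_type,
      fromCols, fromBlocks, Matrix.one_apply, Equiv.prodAssoc,
      Finset.sum_ite_eq, Finset.sum_ite_eq', mul_ite, ite_and, Finset.mul_sum]
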